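/- arXiv:2412.10614 — 6 statements merged into one kernel-verified Lean document; each statement's English description precedes it below -/
import Mathlib

section
/- Let B ∈ ℂ^{m×g}, C ∈ ℂ^{h×n}, A ∈ ℂ^{m×n}. If X ∈ ℂ^{g×h} satisfies the normal equation B*·B·X·C·C* = B*·A·C*, then B·X·C = B·B†·A·C†·C. In particular the optimal approximation B·X·C is uniquely determined. -/
open Matrix

noncomputable def frob {m n : Type*} [Fintype m] [Fintype n] (A : Matrix m n ℂ) : ℝ :=
  Real.sqrt (∑ i, ∑ j, ‖A i j‖ ^ 2)

def IsMPInv {m n : Type*} [Fintype m] [Fintype n]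
    (B : Matrix m n ℂ) (Bd : Matrix n m ℂ) : Prop :=
  B * Bd * B = B ∧ Bd * B * Bd = Bd ∧ (B * Bd)ᴴ = B * Bd ∧ (Bd * B)ᴴ = Bd * B

theorem stmt2 {m n g h : ℕ} (A : Matrix (Fin m) (Fin n) ℂ)
    (B : Matrix (Fin m) (Fin g) ℂ) (Bd : Matrix (Fin g) (Fin m) ℂ)
    (C : Matrix (Fin h) (Fin n) ℂ) (Cd : Matrix (Fin n) (Fin h) ℂ)
    (hB : IsMPInv B Bd) (hC : IsMPInv C Cd)
    (X : Matrix (Fin g) (Fin h) ℂ)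
    (hX : Bᴴ * B * X * C * Cᴴ = Bᴴ * A * Cᴴ) :
    B * X * C = B * Bd * A * Cd * C := by
  obtain ⟨hB1, hB2, hB3, hB4⟩ := hB
  obtain ⟨hC1, hC2, hC3, hC4⟩ := hC
  have e1 : Bdᴴ * Bᴴ = B * Bd := by rw [← conjTranspose_mul, hB3]
  have e2 : Cᴴ * Cdᴴ = Cd * C := by rw [← conjTranspose_mul, hC4]
  have key : Bdᴴ * (Bᴴ * B * X * C * Cᴴ) * Cdᴴ = Bdᴴ * (Bᴴ * A * Cᴴ) * Cdᴴ := by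
    rw [hX]
  calc B * X * C
      = Bdᴴ * (Bᴴ * B * X * C * Cᴴ) * Cdᴴ := by
        simp only [← Matrix.mul_assoc]
        rw [e1, hB1, Matrix.mul_assoc (B * X * C) Cᴴ Cdᴴ, e2,
          Matrix.mul_assoc (B * X) C (Cd * C), ← Matrix.mul_assoc C Cd C, hC1]
    _ = Bdᴴ * (Bᴴ * A * Cᴴ) * Cdᴴ := key
    _ = B * Bd * A * Cd * C := by
        simp only [← Matrix.mul_assoc]
        rw [e1, Matrix.mul_assoc (B * Bd * A) Cᴴ Cdᴴ, e2, ← Matrix.mul_assoc]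
end

section
/- Let R ∈ ℂ^{(m₁+m₂)×n} be the vertical block matrix with top block R₁ ∈ ℂ^{m₁×n} and bottom block R₂ ∈ ℂ^{m₂×n}, and let S = [R₁† | R₂†] ∈ ℂ^{n×(m₁+m₂)} be the horizontal block matrix of the Moore–Penrose inverses. Then S = R† if and only if R·S·R = R. -/
open Matrix

theorem stmt5 {m₁ m₂ n : ℕ}
    (R₁ : Matrix (Fin m₁) (Fin n) ℂ) (R₂ : Matrix (Fin m₂) (Fin n) ℂ)
    (R₁d : Matrix (Fin n) (Fin m₁) ℂ) (R₂d : Matrix (Fin n) (Fin m₂) ℂ)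
    (h₁ : IsMPInv R₁ R₁d) (h₂ : IsMPInv R₂ R₂d) :
    IsMPInv (fromRows R₁ R₂) (fromCols R₁d R₂d) ↔
      fromRows R₁ R₂ * fromCols R₁d R₂d * fromRows R₁ R₂ = fromRows R₁ R₂ := by
  obtain ⟨a1, a2, a3, a4⟩ := h₁
  obtain ⟨b1, b2, b3, b4⟩ := h₂
  constructor
  · exact fun h => h.1
  · intro h
    rw [Matrix.mul_assoc, fromCols_mul_fromRows, fromRows_mul] at h
    rw [fromRows_ext_iff] at h
    obtain ⟨e1, e2⟩ := h
    rw [Matrix.mul_add, ← Matrix.mul_assoc, ← Matrix.mul_assoc, a1, add_eq_left] at e1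
    rw [Matrix.mul_add, ← Matrix.mul_assoc, ← Matrix.mul_assoc, b1, add_eq_right] at e2
    -- e1 : R₁ * R₂d * R₂ = 0, e2 : R₂ * R₁d * R₁ = 0
    have c1 : R₁ * R₂d = 0 := by
      calc R₁ * R₂d = R₁ * (R₂d * R₂ * R₂d) := by rw [b2]
        _ = R₁ * R₂d * R₂ * R₂d := by simp only [Matrix.mul_assoc]
        _ = 0 := by rw [e1, Matrix.zero_mul]
    have c2 : R₂ * R₁d = 0 := by
      calc R₂ * R₁d = R₂ * (R₁d * R₁ * R₁d) := by rw [a2]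
        _ = R₂ * R₁d * R₁ * R₁d := by simp only [Matrix.mul_assoc]
        _ = 0 := by rw [e2, Matrix.zero_mul]
    refine ⟨?_, ?_, ?_, ?_⟩
    · rw [Matrix.mul_assoc, fromCols_mul_fromRows, fromRows_mul, Matrix.mul_add, Matrix.mul_add,
        ← Matrix.mul_assoc, ← Matrix.mul_assoc, ← Matrix.mul_assoc, ← Matrix.mul_assoc, a1, b1, e1, e2,
        add_zero, zero_add]
    · rw [fromCols_mul_fromRows, mul_fromCols, Matrix.add_mul, Matrix.add_mul,
        a2, b2, Matrix.mul_assoc R₂d, c2, Matrix.mul_zero, add_zero,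
        Matrix.mul_assoc R₁d, c1, Matrix.mul_zero, zero_add]
    · rw [fromRows_mul_fromCols, c1, c2, fromBlocks_conjTranspose,
        a3, b3, conjTranspose_zero, conjTranspose_zero]
    · rw [fromCols_mul_fromRows, conjTranspose_add, a4, b4]
end

section
/- Let R ∈ ℂ^{(m₁+m₂)×n} be the vertical block matrix with blocks R₁ ∈ ℂ^{m₁×n} and R₂ ∈ ℂ^{m₂×n}, and S = [R₁† | R₂†]. If the column space of R₂* is contained in the null space of R₁ (equivalently R₁·R₂* = 0), then S = R†. -/
open Matrix

theorem stmt6 {m₁ m₂ n : ℕ}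
    (R₁ : Matrix (Fin m₁) (Fin n) ℂ) (R₂ : Matrix (Fin m₂) (Fin n) ℂ)
    (R₁d : Matrix (Fin n) (Fin m₁) ℂ) (R₂d : Matrix (Fin n) (Fin m₂) ℂ)
    (h₁ : IsMPInv R₁ R₁d) (h₂ : IsMPInv R₂ R₂d)
    (horth : R₁ * R₂ᴴ = 0) :
    IsMPInv (fromRows R₁ R₂) (fromCols R₁d R₂d) := by
  obtain ⟨a1, a2, a3, a4⟩ := h₁
  obtain ⟨b1, b2, b3, b4⟩ := h₂
  have horth' : R₂ * R₁ᴴ = 0 := by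
    have := congrArg conjTranspose horth
    simpa using this
  have h12 : R₁ * R₂d = 0 := by
    calc R₁ * R₂d = R₁ * (R₂d * R₂ * R₂d) := by rw [b2]
    _ = R₁ * ((R₂d * R₂)ᴴ * R₂d) := by rw [b4]
    _ = R₁ * R₂ᴴ * (R₂dᴴ * R₂d) := by
        simp only [conjTranspose_mul, Matrix.mul_assoc]
    _ = 0 := by rw [horth, Matrix.zero_mul]
  have h21 : R₂ * R₁d = 0 := by
    calc R₂ * R₁d = R₂ * (R₁d * R₁ * R₁d) := by rw [a2]
    _ = R₂ * ((R₁d * R₁)ᴴ * R₁d) := by rw [a4]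
    _ = R₂ * R₁ᴴ * (R₁dᴴ * R₁d) := by
        simp only [conjTranspose_mul, Matrix.mul_assoc]
    _ = 0 := by rw [horth', Matrix.zero_mul]
  have hBdB : fromCols R₁d R₂d * fromRows R₁ R₂ = R₁d * R₁ + R₂d * R₂ :=
    fromCols_mul_fromRows _ _ _ _
  have hBBd : fromRows R₁ R₂ * fromCols R₁d R₂d
      = fromBlocks (R₁ * R₁d) 0 0 (R₂ * R₂d) := by
    rw [fromRows_mul_fromCols, h12, h21]
  refine ⟨?_, ?_, ?_, ?_⟩
  · rw [Matrix.mul_assoc, hBdB, fromRows_mul, Matrix.mul_add, Matrix.mul_add]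
    rw [← Matrix.mul_assoc, ← Matrix.mul_assoc, ← Matrix.mul_assoc, ← Matrix.mul_assoc,
      a1, b1, h12, h21, Matrix.zero_mul, Matrix.zero_mul, add_zero, zero_add]
  · rw [hBdB, mul_fromCols, Matrix.add_mul, Matrix.add_mul]
    rw [Matrix.mul_assoc R₂d R₂ R₁d, Matrix.mul_assoc R₁d R₁ R₂d, h12, h21,
      Matrix.mul_zero, Matrix.mul_zero, a2, b2, add_zero, zero_add]
  · rw [hBBd, fromBlocks_conjTranspose, a3, b3]
    simp
  · rw [hBdB]
    simp [conjTranspose_add, a4, b4]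
end

section
/- Let R₁ ∈ ℂ^{m₁×n} and R₂ ∈ ℂ^{m₂×n}, define R₂⁽¹⁾ = R₂·(I − R₁†·R₁), and let R⁽¹⁾ be the vertical block matrix with blocks R₁ and R₂⁽¹⁾. Then the Moore–Penrose inverse of R⁽¹⁾ is the horizontal block matrix [R₁† | (R₂⁽¹⁾)†]. -/
open Matrix

theorem stmt8 {m₁ m₂ n : ℕ}
    (R₁ : Matrix (Fin m₁) (Fin n) ℂ) (R₂ : Matrix (Fin m₂) (Fin n) ℂ)
    (R₁d : Matrix (Fin n) (Fin m₁) ℂ) (R₂d : Matrix (Fin n) (Fin m₂) ℂ)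
    (h₁ : IsMPInv R₁ R₁d) (h₂ : IsMPInv (R₂ * (1 - R₁d * R₁)) R₂d) :
    IsMPInv (fromRows R₁ (R₂ * (1 - R₁d * R₁))) (fromCols R₁d R₂d) := by
  obtain ⟨a1, a2, a3, a4⟩ := h₁
  obtain ⟨b1, b2, b3, b4⟩ := h₂
  set Q : Matrix (Fin m₂) (Fin n) ℂ := R₂ * (1 - R₁d * R₁) with hQ
  have hproj : (1 - R₁d * R₁) * R₁d = 0 := by
    rw [Matrix.sub_mul, Matrix.one_mul, a2, sub_self]
  have hQR₁d : Q * R₁d = 0 := by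
    rw [hQ, Matrix.mul_assoc, hproj, Matrix.mul_zero]
  have hR₁proj : R₁ * (1 - R₁d * R₁) = 0 := by
    rw [Matrix.mul_sub, Matrix.mul_one, ← Matrix.mul_assoc, a1, sub_self]
  have hR₂d_eq : R₂d = (1 - R₁d * R₁) * (R₂ᴴ * (R₂dᴴ * R₂d)) := by
    conv_lhs => rw [← b2]
    rw [← b4]
    rw [conjTranspose_mul, hQ, conjTranspose_mul, conjTranspose_sub,
      conjTranspose_one, a4]
    simp [Matrix.mul_assoc]
  have hR₁R₂d : R₁ * R₂d = 0 := by
    rw [hR₂d_eq, ← Matrix.mul_assoc, hR₁proj, Matrix.zero_mul]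
  have hPR₂d : R₁d * R₁ * R₂d = 0 := by
    rw [Matrix.mul_assoc, hR₁R₂d, Matrix.mul_zero]
  refine ⟨?_, ?_, ?_, ?_⟩
  · rw [fromRows_mul_fromCols, fromBlocks_mul_fromRows, hR₁R₂d, hQR₁d,
      Matrix.zero_mul, Matrix.zero_mul, add_zero, zero_add, a1, b1]
  · rw [fromCols_mul_fromRows, mul_fromCols, Matrix.add_mul, Matrix.add_mul,
      Matrix.mul_assoc R₂d Q R₁d, hQR₁d, Matrix.mul_zero, add_zero, a2, hPR₂d, zero_add, b2]
  · rw [fromRows_mul_fromCols, hR₁R₂d, hQR₁d, fromBlocks_conjTranspose]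
    simp [a3, b3]
  · rw [fromCols_mul_fromRows, conjTranspose_add, a4, b4]
end

section
/- Let B₁ ∈ ℂ^{m×g₁}, B₂ ∈ ℂ^{m×g₂}, C₁ ∈ ℂ^{h₁×n}, C₂ ∈ ℂ^{h₂×n}, and A ∈ ℂ^{m×n}. Suppose B₁*·B₂ = 0 and C₁·C₂* = 0 (mutually orthogonal column spaces of the Bᵢ and row spaces of the Cⱼ). Then the matrices Xᵢⱼ = Bᵢ†·A·Cⱼ† (i,j ∈ {1,2}) satisfy the normal equation B*·B·X·C·C* = B*·A·C*, where B = [B₁ B₂], C is the vertical stack of C₁, C₂, and X = [Xᵢⱼ] is the corresponding 2×2 block matrix; hence they minimize ‖A − Σᵢⱼ Bᵢ·Xᵢⱼ·Cⱼ‖_F. -/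
open Matrix

section aux

variable {m n : Type*} [Fintype m] [Fintype n]

private noncomputable def frobsq (A : Matrix m n ℂ) : ℝ := ∑ i, ∑ j, ‖A i j‖ ^ 2

private lemma frob_eq (A : Matrix m n ℂ) : frob A = Real.sqrt (frobsq A) := rfl

private lemma frobsq_nonneg (A : Matrix m n ℂ) : 0 ≤ frobsq A := by
  apply Finset.sum_nonneg; intro i _; apply Finset.sum_nonneg; intro j _; positivity

private lemma frobsq_add (M N : Matrix m n ℂ) :
    frobsq (M + N) = frobsq M + frobsq N + 2 * ((Mᴴ * N).trace).re := by
  have h : ∀ a b : ℂ, ‖a + b‖^2 = ‖a‖^2 + ‖b‖^2 + 2*(star a * b).re := by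
    intro a b
    simp [← Complex.normSq_eq_norm_sq, Complex.normSq_add, Complex.mul_conj]
  have htr : ((Mᴴ * N).trace).re = ∑ i, ∑ j, (star (M i j) * N i j).re := by
    rw [Matrix.trace, Finset.sum_comm]
    simp [Matrix.diag, Matrix.mul_apply, Complex.re_sum, Matrix.conjTranspose_apply]
  rw [htr, frobsq, frobsq, frobsq]
  simp only [Matrix.add_apply, h]
  simp [Finset.sum_add_distrib, Finset.mul_sum, mul_add]

/-- If the normal equation holds, frobenius norm is minimized. -/
private lemma min_of_normal {g h : Type*} [Fintype g] [Fintype h]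
    (A : Matrix m n ℂ) (B : Matrix m g ℂ) (C : Matrix h n ℂ)
    (X X' : Matrix g h ℂ)
    (hnorm : Bᴴ * B * X * C * Cᴴ = Bᴴ * A * Cᴴ) :
    frob (A - B * X * C) ≤ frob (A - B * X' * C) := by
  have hres : Bᴴ * (A - B * X * C) * Cᴴ = 0 := by
    rw [Matrix.mul_sub, Matrix.sub_mul, ← hnorm]
    simp [Matrix.mul_assoc]
  have hdecomp : A - B * X' * C = (A - B * X * C) + B * (X - X') * C := by
    have : B * (X - X') * C = B * X * C - B * X' * C := by
      rw [Matrix.mul_sub, Matrix.sub_mul]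
    rw [this]; abel
  have htr : (((A - B * X * C)ᴴ * (B * (X - X') * C)).trace) = 0 := by
    set M := A - B * X * C
    have : Mᴴ * (B * (X - X') * C) = (Mᴴ * B) * (X - X') * C := by
      simp [Matrix.mul_assoc]
    rw [this, Matrix.trace_mul_comm, ← Matrix.mul_assoc, ← Matrix.mul_assoc]
    have hz : C * Mᴴ * B = 0 := by
      have := congrArg conjTranspose hres
      simpa [Matrix.conjTranspose_mul, Matrix.mul_assoc] using this
    rw [hz, Matrix.zero_mul, Matrix.trace_zero]
  rw [frob_eq, frob_eq]
  apply Real.sqrt_le_sqrt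
  rw [hdecomp, frobsq_add, htr]
  simp
  exact frobsq_nonneg _

end aux

theorem stmt13 {m n g₁ g₂ h₁ h₂ : ℕ}
    (A : Matrix (Fin m) (Fin n) ℂ)
    (B₁ : Matrix (Fin m) (Fin g₁) ℂ) (B₂ : Matrix (Fin m) (Fin g₂) ℂ)
    (C₁ : Matrix (Fin h₁) (Fin n) ℂ) (C₂ : Matrix (Fin h₂) (Fin n) ℂ)
    (B₁d : Matrix (Fin g₁) (Fin m) ℂ) (B₂d : Matrix (Fin g₂) (Fin m) ℂ)
    (C₁d : Matrix (Fin n) (Fin h₁) ℂ) (C₂d : Matrix (Fin n) (Fin h₂) ℂ)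
    (hB₁ : IsMPInv B₁ B₁d) (hB₂ : IsMPInv B₂ B₂d)
    (hC₁ : IsMPInv C₁ C₁d) (hC₂ : IsMPInv C₂ C₂d)
    (hBorth : B₁ᴴ * B₂ = 0) (hCorth : C₁ * C₂ᴴ = 0) :
    letI B := fromCols B₁ B₂
    letI C := fromRows C₁ C₂
    letI X := fromBlocks (B₁d * A * C₁d) (B₁d * A * C₂d) (B₂d * A * C₁d) (B₂d * A * C₂d)
    Bᴴ * B * X * C * Cᴴ = Bᴴ * A * Cᴴ ∧
      ∀ X' : Matrix (Fin g₁ ⊕ Fin g₂) (Fin h₁ ⊕ Fin h₂) ℂ,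
        frob (A - B * X * C) ≤ frob (A - B * X' * C) := by
  set B := fromCols B₁ B₂ with hBdef
  set C := fromRows C₁ C₂ with hCdef
  set X := fromBlocks (B₁d * A * C₁d) (B₁d * A * C₂d) (B₂d * A * C₁d) (B₂d * A * C₂d) with hXdef
  -- orthogonality in the other direction
  have hBorth' : B₂ᴴ * B₁ = 0 := by
    have := congrArg conjTranspose hBorth
    simpa [Matrix.conjTranspose_mul] using this
  have hCorth' : C₂ * C₁ᴴ = 0 := by
    have := congrArg conjTranspose hCorth
    simpa [Matrix.conjTranspose_mul] using this
  -- key MP facts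
  have kB : ∀ {g : ℕ} (Bi : Matrix (Fin m) (Fin g) ℂ) (Bid : Matrix (Fin g) (Fin m) ℂ),
      IsMPInv Bi Bid → Biᴴ * Bi * Bid = Biᴴ := by
    intro g Bi Bid ⟨h1, _, h3, _⟩
    calc Biᴴ * Bi * Bid = Biᴴ * (Bi * Bid) := by rw [Matrix.mul_assoc]
    _ = Biᴴ * (Bi * Bid)ᴴ := by rw [h3]
    _ = (Bi * Bid * Bi)ᴴ := by simp [Matrix.conjTranspose_mul, Matrix.mul_assoc]
    _ = Biᴴ := by rw [h1]
  have kC : ∀ {h : ℕ} (Ci : Matrix (Fin h) (Fin n) ℂ) (Cid : Matrix (Fin n) (Fin h) ℂ),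
      IsMPInv Ci Cid → Cid * Ci * Ciᴴ = Ciᴴ := by
    intro h Ci Cid ⟨h1, _, _, h4⟩
    calc Cid * Ci * Ciᴴ = (Cid * Ci)ᴴ * Ciᴴ := by rw [h4]
    _ = (Ci * (Cid * Ci))ᴴ := by simp [Matrix.conjTranspose_mul, Matrix.mul_assoc]
    _ = Ciᴴ := by rw [← Matrix.mul_assoc, h1]
  have kB₁ := kB B₁ B₁d hB₁
  have kB₂ := kB B₂ B₂d hB₂
  have kC₁ := kC C₁ C₁d hC₁
  have kC₂ := kC C₂ C₂d hC₂
  have hnormal : Bᴴ * B * X * C * Cᴴ = Bᴴ * A * Cᴴ := by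
    have hBXC : B * X * C =
        B₁ * (B₁d * A * C₁d) * C₁ + B₁ * (B₁d * A * C₂d) * C₂ +
        (B₂ * (B₂d * A * C₁d) * C₁ + B₂ * (B₂d * A * C₂d) * C₂) := by
      show fromCols B₁ B₂ * X * fromRows C₁ C₂ = _
      rw [fromCols_mul_fromBlocks, fromCols_mul_fromRows]
      rw [Matrix.add_mul, Matrix.add_mul]
      simp [Matrix.mul_assoc]
      abel
    have key : ∀ (M : Matrix (Fin m) (Fin n) ℂ),
        Bᴴ * M * Cᴴ = fromBlocks (B₁ᴴ * M * C₁ᴴ) (B₁ᴴ * M * C₂ᴴ)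
          (B₂ᴴ * M * C₁ᴴ) (B₂ᴴ * M * C₂ᴴ) := by
      intro M
      show (fromCols B₁ B₂)ᴴ * M * (fromRows C₁ C₂)ᴴ = _
      rw [conjTranspose_fromCols_eq_fromRows_conjTranspose,
        conjTranspose_fromRows_eq_fromCols_conjTranspose,
        fromRows_mul]
      simp only [mul_fromCols, fromRows_mul]
      rw [fromCols_fromRows_eq_fromBlocks]
    have hassoc : Bᴴ * B * X * C * Cᴴ = Bᴴ * (B * X * C) * Cᴴ := by
      simp [Matrix.mul_assoc]
    have kC₁' : ∀ {g : ℕ} (P : Matrix (Fin g) (Fin n) ℂ), P * C₁d * C₁ * C₁ᴴ = P * C₁ᴴ := by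
      intro g P
      calc P * C₁d * C₁ * C₁ᴴ = P * (C₁d * C₁ * C₁ᴴ) := by simp [Matrix.mul_assoc]
      _ = P * C₁ᴴ := by rw [kC₁]
    have kC₂' : ∀ {g : ℕ} (P : Matrix (Fin g) (Fin n) ℂ), P * C₂d * C₂ * C₂ᴴ = P * C₂ᴴ := by
      intro g P
      calc P * C₂d * C₂ * C₂ᴴ = P * (C₂d * C₂ * C₂ᴴ) := by simp [Matrix.mul_assoc]
      _ = P * C₂ᴴ := by rw [kC₂]
    have oC₁₂ : ∀ {g : ℕ} (P : Matrix (Fin g) (Fin h₁) ℂ), P * C₁ * C₂ᴴ = 0 := by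
      intro g P
      rw [Matrix.mul_assoc, hCorth, Matrix.mul_zero]
    have oC₂₁ : ∀ {g : ℕ} (P : Matrix (Fin g) (Fin h₂) ℂ), P * C₂ * C₁ᴴ = 0 := by
      intro g P
      rw [Matrix.mul_assoc, hCorth', Matrix.mul_zero]
    rw [hassoc, key, key, hBXC, Matrix.fromBlocks_inj]
    refine ⟨?_, ?_, ?_, ?_⟩ <;>
    · simp only [Matrix.mul_add, Matrix.add_mul, ← Matrix.mul_assoc, hBorth, hBorth',
        Matrix.zero_mul, Matrix.mul_zero, add_zero, zero_add, kB₁, kB₂, kC₁', kC₂',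
        oC₁₂, oC₂₁]
  refine ⟨hnormal, fun X' => min_of_normal A B C X X' hnormal⟩
end

section
/- Let B ∈ ℂ^{m×g}, C ∈ ℂ^{h×n}, A ∈ ℂ^{m×n}, and X ∈ ℂ^{g×h} arbitrary. Then the Pythagorean identity ‖A − B·X·C‖_F² = ‖A − B·B†·A·C†·C‖_F² + ‖B·B†·A·C†·C − B·X·C‖_F² holds. -/
open Matrix

lemma frob_sq {m n : Type*} [Fintype m] [Fintype n] (A : Matrix m n ℂ) :
    frob A ^ 2 = ∑ i, ∑ j, ‖A i j‖ ^ 2 := by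
  rw [frob, Real.sq_sqrt]
  positivity

theorem stmt14 {m n g h : ℕ} (A : Matrix (Fin m) (Fin n) ℂ)
    (B : Matrix (Fin m) (Fin g) ℂ) (Bd : Matrix (Fin g) (Fin m) ℂ)
    (C : Matrix (Fin h) (Fin n) ℂ) (Cd : Matrix (Fin n) (Fin h) ℂ)
    (hB : IsMPInv B Bd) (hC : IsMPInv C Cd)
    (X : Matrix (Fin g) (Fin h) ℂ) :
    frob (A - B * X * C) ^ 2 =
      frob (A - B * Bd * A * Cd * C) ^ 2 +
        frob (B * Bd * A * Cd * C - B * X * C) ^ 2 := by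
  obtain ⟨hB1, hB2, hB3, hB4⟩ := hB
  obtain ⟨hC1, hC2, hC3, hC4⟩ := hC
  set U := A - B * Bd * A * Cd * C with hU
  set V := B * Bd * A * Cd * C - B * X * C with hV
  have hUV : A - B * X * C = U + V := by rw [hU, hV]; abel
  -- P U Q = 0
  have hPUQ : (B * Bd) * U * (Cd * C) = 0 := by
    rw [hU, Matrix.mul_sub, Matrix.sub_mul]
    have e1 : B * Bd * (B * Bd * A * Cd * C) * (Cd * C)
        = B * Bd * A * (Cd * C) := by
      have : B * Bd * (B * Bd * A * Cd * C) * (Cd * C)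
          = (B * Bd * B) * Bd * A * ((Cd * C * Cd) * C) := by
        simp [Matrix.mul_assoc]
      rw [this, hB1, hC2]
    rw [e1, sub_self]
  -- V = P V Q
  have hPVQ : (B * Bd) * V * (Cd * C) = V := by
    rw [hV, Matrix.mul_sub, Matrix.sub_mul]
    have e1 : B * Bd * (B * Bd * A * Cd * C) * (Cd * C)
        = B * Bd * A * Cd * C := by
      have : B * Bd * (B * Bd * A * Cd * C) * (Cd * C)
          = (B * Bd * B) * Bd * A * ((Cd * C * Cd) * C) := by
        simp [Matrix.mul_assoc]
      rw [this, hB1, hC2]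
      simp [Matrix.mul_assoc]
    have e2 : B * Bd * (B * X * C) * (Cd * C) = B * X * C := by
      have : B * Bd * (B * X * C) * (Cd * C)
          = (B * Bd * B) * X * (C * Cd * C) := by
        simp [Matrix.mul_assoc]
      rw [this, hB1, hC1]
    rw [e1, e2]
  -- trace orthogonality
  have hQUP : (Cd * C) * Uᴴ * (B * Bd) = 0 := by
    calc (Cd * C) * Uᴴ * (B * Bd) = (Cd * C)ᴴ * Uᴴ * (B * Bd)ᴴ := by rw [hC4, hB3]
      _ = ((B * Bd) * U * (Cd * C))ᴴ := by
          rw [conjTranspose_mul, conjTranspose_mul]; simp [Matrix.mul_assoc]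
      _ = 0 := by rw [hPUQ, conjTranspose_zero]
  have htr : Matrix.trace (Uᴴ * V) = 0 := by
    calc Matrix.trace (Uᴴ * V)
        = Matrix.trace (Uᴴ * ((B * Bd) * V * (Cd * C))) := by rw [hPVQ]
      _ = Matrix.trace ((Uᴴ * ((B * Bd) * V)) * (Cd * C)) := by
            simp [Matrix.mul_assoc]
      _ = Matrix.trace ((Cd * C) * (Uᴴ * ((B * Bd) * V))) := by
            rw [Matrix.trace_mul_comm]
      _ = Matrix.trace (((Cd * C) * Uᴴ * (B * Bd)) * V) := by
            simp [Matrix.mul_assoc]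
      _ = 0 := by rw [hQUP]; simp
  -- entrywise sum form of trace
  have htr' : (∑ i, ∑ j, (starRingEnd ℂ) (U i j) * V i j) = 0 := by
    have : Matrix.trace (Uᴴ * V) = ∑ j, ∑ i, (starRingEnd ℂ) (U i j) * V i j := by
      simp [Matrix.trace, Matrix.diag, Matrix.mul_apply, Matrix.conjTranspose_apply]
    rw [Finset.sum_comm] at this
    rw [← this, htr]
  have hre : (∑ i, ∑ j, ((starRingEnd ℂ) (U i j) * V i j).re) = 0 := by
    have := congrArg Complex.re htr'
    simpa [Complex.re_sum] using this
  -- pointwise Pythagorean expansion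
  have key : ∀ i j, ‖(U + V) i j‖ ^ 2
      = ‖U i j‖ ^ 2 + ‖V i j‖ ^ 2 + 2 * ((starRingEnd ℂ) (U i j) * V i j).re := by
    intro i j
    simp only [Matrix.add_apply]
    set u := U i j; set v := V i j
    have h1 : ∀ z : ℂ, ‖z‖ ^ 2 = Complex.normSq z := by
      intro z; rw [← Complex.sq_norm]
    rw [h1, h1, h1, Complex.normSq_add]
    have h2 : (u * (starRingEnd ℂ) v).re = ((starRingEnd ℂ) u * v).re := by
      simp [Complex.mul_re]
    rw [h2]
  rw [hUV, frob_sq, frob_sq, frob_sq]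
  have expand : ∑ i, ∑ j, ‖(U + V) i j‖ ^ 2
      = (∑ i, ∑ j, ‖U i j‖ ^ 2) + (∑ i, ∑ j, ‖V i j‖ ^ 2)
        + 2 * ∑ i, ∑ j, ((starRingEnd ℂ) (U i j) * V i j).re := by
    simp only [key]
    rw [Finset.mul_sum]
    rw [← Finset.sum_add_distrib, ← Finset.sum_add_distrib]
    congr 1; ext i
    rw [Finset.mul_sum, ← Finset.sum_add_distrib, ← Finset.sum_add_distrib]
  rw [expand, hre]
  ring
end
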